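/- arXiv:2107.09696 — 7 statements merged into one kernel-verified Lean document; each statement's English description precedes it below -/
import Mathlib

section
/- Let 𝒮 be a 1-nested compatible set pair system on X and let (S,H) ∈ 𝒮 with H ≠ ∅. Then there is exactly one element of 𝒮 that covers (S,H) in the partial order (𝒮,≤); that is, (S,H) has indegree 1 in the Hasse diagram D(𝒮). -/
open Set

variable {X : Type*}

/-- A set pair on `X`: an ordered pair `(S,H)` of subsets of `X` with `S ≠ ∅` and `S ∩ H = ∅`. -/
def IsSetPair (p : Set X × Set X) : Prop :=
  p.1 ≠ ∅ ∧ p.1 ∩ p.2 = ∅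

/-- A set pair system on `X`: a collection of set pairs on `X`. -/
def IsSPS (𝒮 : Set (Set X × Set X)) : Prop :=
  ∀ p ∈ 𝒮, IsSetPair p

/-- The strict relation `<` on set pairs: `(S₁,H₁) < (S₂,H₂)` iff they are distinct and
(a) `S₁ ∪ H₁ ⊆ S₂`, or (b) `S₁ ∪ H₁ ⊆ H₂`, or (c) `S₁ ⊊ S₂` and `H₁ = H₂ ≠ ∅`. -/
def splt (p q : Set X × Set X) : Prop :=
  p ≠ q ∧ (p.1 ∪ p.2 ⊆ q.1 ∨ p.1 ∪ p.2 ⊆ q.2 ∨ (p.1 ⊂ q.1 ∧ p.2 = q.2 ∧ q.2 ≠ ∅))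

/-- `(S₁,H₁) ≤ (S₂,H₂)` iff `(S₁,H₁) < (S₂,H₂)` or `(S₁,H₁) = (S₂,H₂)`. -/
def sple (p q : Set X × Set X) : Prop :=
  splt p q ∨ p = q

/-- Exactly one of four propositions holds. -/
def ExactlyOne4 (a b c d : Prop) : Prop :=
  (a ∧ ¬b ∧ ¬c ∧ ¬d) ∨ (¬a ∧ b ∧ ¬c ∧ ¬d) ∨ (¬a ∧ ¬b ∧ c ∧ ¬d) ∨ (¬a ∧ ¬b ∧ ¬c ∧ d)

/-- Exactly one of three propositions holds. -/
def ExactlyOne3 (a b c : Prop) : Prop :=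
  (a ∧ ¬b ∧ ¬c) ∨ (¬a ∧ b ∧ ¬c) ∨ (¬a ∧ ¬b ∧ c)

/-- A 1-nested compatible set pair system on `X`: a set pair system satisfying (NC1)–(NC5). -/
def OneNestedCompatible (𝒮 : Set (Set X × Set X)) : Prop :=
  IsSPS 𝒮 ∧
  -- (NC1)
  (((Set.univ : Set X), (∅ : Set X)) ∈ 𝒮) ∧
  -- (NC2)
  (∀ x : X, (({x} : Set X), (∅ : Set X)) ∈ 𝒮) ∧
  -- (NC3)
  (∀ p ∈ 𝒮, p.2 ≠ ∅ → ((p.2, (∅ : Set X)) : Set X × Set X) ∈ 𝒮) ∧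
  -- (NC4)
  (∀ p ∈ 𝒮, ∀ q ∈ 𝒮, p ≠ q →
    ExactlyOne4 (splt p q) (splt q p)
      ((p.1 ∪ p.2) ∩ (q.1 ∪ q.2) = ∅)
      (p.1 ∩ q.1 = ∅ ∧ p.2 = q.2 ∧ p.2 ≠ ∅)) ∧
  -- (NC5)
  (¬ ∃ p ∈ 𝒮, ∃ q ∈ 𝒮, ∃ r ∈ 𝒮,
    p.2 = q.2 ∧ q.2 = r.2 ∧ p.2 ≠ ∅ ∧ p.1 ∩ q.1 = ∅ ∧
    (p.1 ∪ q.1 ⊆ r.1 ∨ (p.1 ∪ q.1) ∩ r.1 = ∅))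

/-- `p` covers `q` in the partial order `(𝒮,≤)`: an arc from `p` to `q`
in the Hasse diagram `D(𝒮)`; `p` is a parent of `q`, and `q` is a child of `p`. -/
def SPCovers (𝒮 : Set (Set X × Set X)) (p q : Set X × Set X) : Prop :=
  p ∈ 𝒮 ∧ q ∈ 𝒮 ∧ splt q p ∧ ¬ ∃ r ∈ 𝒮, splt q r ∧ splt r p

/-- `L` is the directed path `P(S,H)` in `D(𝒮)` associated with `(S,H) ∈ 𝒮`, `H ≠ ∅`:
a sequence `(q₀,…,q_m)` of elements of `𝒮` with `m ≥ 2` in which `q_j` covers `q_{j+1}`,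
such that `q_m = (H,∅)`, every interior `q_j` (`1 ≤ j ≤ m-1`) has second component `H`,
`q_i = (S,H)` for some `1 ≤ i ≤ m-1`, and the first element `q₀ = (S₊,H₊)` satisfies
`S ∪ H ⊆ S₊` and `H₊ ≠ H`. -/
def IsSPPath (𝒮 : Set (Set X × Set X)) (S H : Set X) (L : List (Set X × Set X)) : Prop :=
  3 ≤ L.length ∧
  List.Chain' (fun a b => SPCovers 𝒮 a b) L ∧
  L.getLast? = some ((H, (∅ : Set X)) : Set X × Set X) ∧
  (∀ i : ℕ, ∀ p : Set X × Set X, 1 ≤ i → i + 1 < L.length → L[i]? = some p → p.2 = H) ∧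
  (∃ i : ℕ, 1 ≤ i ∧ i + 1 < L.length ∧ L[i]? = some ((S, H) : Set X × Set X)) ∧
  (∃ p : Set X × Set X, L.head? = some p ∧ S ∪ H ⊆ p.1 ∧ p.2 ≠ H)

/-- A directed path in the Hasse diagram `D(𝒮)`: a sequence of at least two elements of `𝒮`
in which each element covers the next. -/
def IsDirPath (𝒮 : Set (Set X × Set X)) (L : List (Set X × Set X)) : Prop :=
  2 ≤ L.length ∧ List.Chain' (fun a b => SPCovers 𝒮 a b) L ∧ ∀ p ∈ L, p ∈ 𝒮


lemma empty_of_subset_disjoint {A B : Set X} (h : A ⊆ B) (hd : A ∩ B = ∅) : A = ∅ :=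
  Set.eq_empty_of_subset_empty (hd ▸ Set.subset_inter Set.Subset.rfl h)

lemma splt_asymm {p q : Set X × Set X} (hp : IsSetPair p) (hq : IsSetPair q)
    (h1 : splt p q) (h2 : splt q p) : False := by
  obtain ⟨hne, h1⟩ := h1
  obtain ⟨-, h2⟩ := h2
  obtain ⟨hP1, hPd⟩ := hp
  obtain ⟨hQ1, hQd⟩ := hq
  rcases h1 with h1 | h1 | ⟨h1, h1e, -⟩ <;> rcases h2 with h2 | h2 | ⟨h2, h2e, -⟩
  · have e1 : p.1 = q.1 :=
      Set.Subset.antisymm (Set.subset_union_left.trans h1) (Set.subset_union_left.trans h2)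
    have e2 : p.2 = ∅ := by
      refine empty_of_subset_disjoint (e1 ▸ Set.subset_union_right.trans h1) ?_
      rw [Set.inter_comm] at hPd; exact hPd
    have e3 : q.2 = ∅ := by
      refine empty_of_subset_disjoint (e1 ▸ Set.subset_union_right.trans h2) ?_
      rw [Set.inter_comm] at hQd; exact hQd
    exact hne (Prod.ext e1 (e2.trans e3.symm))
  · exact hP1 (empty_of_subset_disjoint
      ((Set.subset_union_left.trans h1).trans (Set.subset_union_left.trans h2)) hPd)
  · exact h2.not_subset (Set.subset_union_left.trans h1)
  · exact hQ1 (empty_of_subset_disjoint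
      ((Set.subset_union_left.trans h2).trans (Set.subset_union_left.trans h1)) hQd)
  · exact hP1 (empty_of_subset_disjoint
      ((Set.subset_union_left.trans h1).trans (Set.subset_union_right.trans h2)) hPd)
  · exact hP1 (empty_of_subset_disjoint
      (h2e ▸ Set.subset_union_left.trans h1) hPd)
  · exact h1.not_subset (Set.subset_union_left.trans h2)
  · exact hQ1 (empty_of_subset_disjoint
      (h1e ▸ Set.subset_union_left.trans h2) hQd)
  · exact (h1.trans h2).ne rfl

lemma splt_trans {p q r : Set X × Set X} (hp : IsSetPair p) (hq : IsSetPair q)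
    (h1 : splt p q) (h2 : splt q r) : splt p r := by
  refine ⟨?_, ?_⟩
  · rintro rfl; exact splt_asymm hp hq h1 h2
  obtain ⟨-, h1⟩ := h1
  obtain ⟨-, h2⟩ := h2
  rcases h1 with h1 | h1 | ⟨h1, h1e, h1n⟩ <;> rcases h2 with h2 | h2 | ⟨h2, h2e, h2n⟩
  · exact Or.inl (h1.trans (Set.subset_union_left.trans h2))
  · exact Or.inr (Or.inl (h1.trans (Set.subset_union_left.trans h2)))
  · exact Or.inl (h1.trans h2.subset)
  · exact Or.inl (h1.trans (Set.subset_union_right.trans h2))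
  · exact Or.inr (Or.inl (h1.trans (Set.subset_union_right.trans h2)))
  · exact Or.inr (Or.inl (h2e ▸ h1))
  · exact Or.inl ((Set.union_subset_union h1.subset h1e.subset).trans h2)
  · exact Or.inr (Or.inl ((Set.union_subset_union h1.subset h1e.subset).trans h2))
  · exact Or.inr (Or.inr ⟨h1.trans h2, h1e.trans h2e, h2n⟩)

/-- If `𝒮` is 1-nested compatible and `(S,H) ∈ 𝒮` with `H ≠ ∅`, then exactly one
element of `𝒮` covers `(S,H)`; i.e. `(S,H)` has indegree 1 in the Hasse diagram `D(𝒮)`. -/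
theorem indegree_one_of_H_nonempty {X : Type*} [Fintype X] [Nonempty X]
    (𝒮 : Set (Set X × Set X)) (h : OneNestedCompatible 𝒮)
    (S H : Set X) (hmem : ((S, H) : Set X × Set X) ∈ 𝒮) (hH : H ≠ ∅) :
    ∃! p : Set X × Set X, SPCovers 𝒮 p (S, H) := by
  obtain ⟨hSPS, hNC1, hNC2, hNC3, hNC4, hNC5⟩ := h
  obtain ⟨hSne, hSHd⟩ := hSPS _ hmem
  have hSnon : S.Nonempty := Set.nonempty_iff_ne_empty.2 hSne
  -- Existence: take a minimal element above (S,H).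
  have hwf : WellFounded (fun a b : {r : Set X × Set X // r ∈ 𝒮} => splt a.1 b.1) := by
    have h1 : IsIrrefl {r : Set X × Set X // r ∈ 𝒮} (fun a b => splt a.1 b.1) :=
      ⟨fun a ha => ha.1 rfl⟩
    have h2 : IsTrans {r : Set X × Set X // r ∈ 𝒮} (fun a b => splt a.1 b.1) :=
      ⟨fun a b c hab hbc => splt_trans (hSPS _ a.2) (hSPS _ b.2) hab hbc⟩
    exact Finite.wellFounded_of_trans_of_irrefl _
  have hAne : (⟨(Set.univ, ∅), hNC1⟩ : {r : Set X × Set X // r ∈ 𝒮}) ∈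
      {a : {r : Set X × Set X // r ∈ 𝒮} | splt (S, H) a.1} := by
    refine ⟨fun heq => hH ?_, Or.inl (Set.subset_univ _)⟩
    exact congrArg Prod.snd heq
  obtain ⟨m, hm, hmin⟩ := hwf.has_min _ ⟨_, hAne⟩
  have hcovm : SPCovers 𝒮 m.1 (S, H) := by
    refine ⟨m.2, hmem, hm, ?_⟩
    rintro ⟨r, hr, hr1, hr2⟩
    exact hmin ⟨r, hr⟩ hr1 hr2
  -- Uniqueness: any two covers coincide.
  have huniq : ∀ p q : Set X × Set X, SPCovers 𝒮 p (S, H) → SPCovers 𝒮 q (S, H) → p = q := by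
    intro p q hp hq
    by_contra hne
    obtain ⟨hpS, -, hsp, hpno⟩ := hp
    obtain ⟨hqS, -, hsq, hqno⟩ := hq
    obtain ⟨hp1, hpd⟩ := hSPS _ hpS
    obtain ⟨hq1, hqd⟩ := hSPS _ hqS
    rcases hNC4 p hpS q hqS hne with ⟨h1, -, -, -⟩ | ⟨-, h2, -, -⟩ | ⟨-, -, h3, -⟩ |
      ⟨-, -, -, hdj, hKe, hKne⟩
    · exact hqno ⟨p, hpS, hsp, h1⟩
    · exact hpno ⟨q, hqS, hsq, h2⟩
    · -- disjoint supports: impossible since S is inside both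
      have hSp : S ⊆ p.1 ∪ p.2 := by
        rcases hsp.2 with hc | hc | ⟨hc, -, -⟩
        · exact (Set.subset_union_left.trans hc).trans Set.subset_union_left
        · exact (Set.subset_union_left.trans hc).trans Set.subset_union_right
        · exact hc.subset.trans Set.subset_union_left
      have hSq : S ⊆ q.1 ∪ q.2 := by
        rcases hsq.2 with hc | hc | ⟨hc, -, -⟩
        · exact (Set.subset_union_left.trans hc).trans Set.subset_union_left
        · exact (Set.subset_union_left.trans hc).trans Set.subset_union_right
        · exact hc.subset.trans Set.subset_union_left
      exact hSne (Set.eq_empty_of_subset_empty (h3 ▸ Set.subset_inter hSp hSq))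
    · -- p.1 ∩ q.1 = ∅, p.2 = q.2 ≠ ∅
      have hSinP1 : S ⊆ p.1 → S ⊆ q.1 → False := fun ha hb =>
        hSne (Set.eq_empty_of_subset_empty (hdj ▸ Set.subset_inter ha hb))
      have key : S ∪ H ⊆ p.2 → False := by
        -- then (p.2, ∅) lies strictly between (S,H) and p
        intro hb
        refine hpno ⟨(p.2, ∅), hNC3 p hpS hKne, ⟨?_, Or.inl hb⟩, ?_, Or.inr (Or.inl ?_)⟩
        · intro heq; exact hH (congrArg Prod.snd heq)
        · intro heq
          exact hKne (by rw [← heq])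
        · simp
      have hSH_H : S ⊆ H → False := fun hc =>
        hSne (empty_of_subset_disjoint hc hSHd)
      rcases hsp.2 with ha | ha | ⟨ha, hae, -⟩ <;> rcases hsq.2 with hb | hb | ⟨hb, hbe, -⟩
      · exact hSinP1 (Set.subset_union_left.trans ha) (Set.subset_union_left.trans hb)
      · -- S ⊆ p.1 and S ⊆ q.2 = p.2
        have hs2 : S ⊆ p.2 := by rw [hKe]; exact Set.subset_union_left.trans hb
        exact hSne (Set.eq_empty_of_subset_empty (hpd ▸
          Set.subset_inter (Set.subset_union_left.trans ha) hs2))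
      · exact hSinP1 (Set.subset_union_left.trans ha) hb.subset
      · -- S ⊆ q.1 and S ⊆ p.2 = q.2
        have hs2 : S ⊆ q.2 := by rw [← hKe]; exact Set.subset_union_left.trans ha
        exact hSne (Set.eq_empty_of_subset_empty (hqd ▸
          Set.subset_inter (Set.subset_union_left.trans hb) hs2))
      · exact key ha
      · -- S ∪ H ⊆ p.2 = q.2 = H
        have he : p.2 = H := by rw [hKe, ← hbe]
        rw [he] at ha
        exact hSH_H (Set.union_subset_iff.mp ha).1
      · exact hSinP1 ha.subset (Set.subset_union_left.trans hb)
      · -- S ∪ H ⊆ q.2 = p.2 = H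
        have he : q.2 = H := by rw [← hKe, ← hae]
        rw [he] at hb
        exact hSH_H (Set.union_subset_iff.mp hb).1
      · exact hSinP1 ha.subset hb.subset
  exact ⟨m.1, hcovm, fun y hy => huniq y m.1 hy hcovm⟩
end

section
/- Let 𝒮 be a 1-nested compatible set pair system on X and let (S,H) ∈ 𝒮 with H ≠ ∅ (so that (H,∅) ∈ 𝒮 by (NC3)). Then for every (S₁,H₁) ∈ 𝒮 with (H,∅) < (S₁,H₁) < (S,H), we have S₁ ⊊ S and H₁ = H. -/
open Set

variable {X : Type*}

/-- If `𝒮` is 1-nested compatible, `(S,H) ∈ 𝒮` with `H ≠ ∅`, then for every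
`(S₁,H₁) ∈ 𝒮` with `(H,∅) < (S₁,H₁) < (S,H)` we have `S₁ ⊊ S` and `H₁ = H`. -/
theorem between_H_empty_and_SH {X : Type*} [Fintype X] [Nonempty X]
    (𝒮 : Set (Set X × Set X)) (h : OneNestedCompatible 𝒮)
    (S H : Set X) (hmem : ((S, H) : Set X × Set X) ∈ 𝒮) (hH : H ≠ ∅)
    (S₁ H₁ : Set X) (hmem₁ : ((S₁, H₁) : Set X × Set X) ∈ 𝒮)
    (hlow : splt ((H, (∅ : Set X)) : Set X × Set X) (S₁, H₁))
    (hup : splt ((S₁, H₁) : Set X × Set X) (S, H)) :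
    S₁ ⊂ S ∧ H₁ = H := by
  obtain ⟨hne, hd⟩ := hup
  obtain ⟨hne', hd'⟩ := hlow
  have hsp : IsSetPair ((S, H) : Set X × Set X) := h.1 _ hmem
  have hsp₁ : IsSetPair ((S₁, H₁) : Set X × Set X) := h.1 _ hmem₁
  simp only [IsSetPair] at hsp hsp₁
  -- hd' : H ∪ ∅ ⊆ S₁ ∨ H ∪ ∅ ⊆ H₁ ∨ ...
  have hHsub : H ⊆ S₁ ∨ H ⊆ H₁ := by
    rcases hd' with h1 | h2 | h3
    · left; intro x hx; exact h1 (Or.inl hx)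
    · right; intro x hx; exact h2 (Or.inl hx)
    · exact absurd h3.2.1.symm h3.2.2
  rcases hd with h1 | h2 | h3
  · -- S₁ ∪ H₁ ⊆ S : contradiction since H ⊆ S but S ∩ H = ∅
    exfalso
    have hHS : H ⊆ S := by
      rcases hHsub with hs | hs
      · exact fun x hx => h1 (Or.inl (hs hx))
      · exact fun x hx => h1 (Or.inr (hs hx))
    obtain ⟨x, hx⟩ := Set.nonempty_iff_ne_empty.mpr hH
    exact absurd (Set.eq_empty_iff_forall_notMem.mp hsp.2 x) (by simp [hx, hHS hx])
  · -- S₁ ∪ H₁ ⊆ H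
    exfalso
    have hS₁H : S₁ ⊆ H := fun x hx => h2 (Or.inl hx)
    have hH₁H : H₁ ⊆ H := fun x hx => h2 (Or.inr hx)
    rcases hHsub with hs | hs
    · have hSe : S₁ = H := Set.Subset.antisymm hS₁H hs
      have hH₁e : H₁ = ∅ := by
        have : H₁ ⊆ S₁ := hSe ▸ hH₁H
        rw [Set.eq_empty_iff_forall_notMem]
        intro x hx
        exact absurd (Set.eq_empty_iff_forall_notMem.mp hsp₁.2 x) (by simp [hx, this hx])
      exact hne' (by simp [Prod.ext_iff, hSe, hH₁e])
    · have hHe : H₁ = H := Set.Subset.antisymm hH₁H hs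
      obtain ⟨x, hx⟩ := Set.nonempty_iff_ne_empty.mpr hsp₁.1
      exact absurd (Set.eq_empty_iff_forall_notMem.mp hsp₁.2 x)
        (by simp [hx, hHe ▸ hS₁H hx])
  · exact ⟨h3.1, h3.2.1⟩
end

section
/- Let 𝒮 be a 1-nested compatible set pair system on X and let (S,∅) ∈ 𝒮. Then: (i) (S,∅) has at most one parent (S₁,H₁) with H₁ = ∅ in D(𝒮); (ii) (S,∅) has at most two distinct parents (S₁,H₁), (S₂,H₂) with H₁ ≠ ∅ and H₂ ≠ ∅ in D(𝒮); and (iii) if (S₁,H₁) and (S₂,H₂) are two distinct parents of (S,∅) with H₁ ≠ ∅ and H₂ ≠ ∅, then S₁ ∩ S₂ = ∅ and H₁ = H₂ = S. -/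
open Set

variable {X : Type*}

/-- If `𝒮` is 1-nested compatible and `(S,∅) ∈ 𝒮`, then (i) `(S,∅)` has at most
one parent with empty second component in `D(𝒮)`, (ii) at most two distinct parents with
nonempty second components, and (iii) if it has two distinct parents with nonempty second
components, these have disjoint first components and both second components equal `S`. -/
theorem parents_of_empty_H {X : Type*} [Fintype X] [Nonempty X]
    (𝒮 : Set (Set X × Set X)) (h : OneNestedCompatible 𝒮)
    (S : Set X) (hmem : ((S, (∅ : Set X)) : Set X × Set X) ∈ 𝒮) :
    (∀ p q : Set X × Set X,
      SPCovers 𝒮 p (S, (∅ : Set X)) → SPCovers 𝒮 q (S, (∅ : Set X)) →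
      p.2 = ∅ → q.2 = ∅ → p = q) ∧
    (∀ p q r : Set X × Set X,
      SPCovers 𝒮 p (S, (∅ : Set X)) → SPCovers 𝒮 q (S, (∅ : Set X)) →
      SPCovers 𝒮 r (S, (∅ : Set X)) →
      p.2 ≠ ∅ → q.2 ≠ ∅ → r.2 ≠ ∅ → p ≠ q → p ≠ r → q ≠ r → False) ∧
    (∀ p q : Set X × Set X,
      SPCovers 𝒮 p (S, (∅ : Set X)) → SPCovers 𝒮 q (S, (∅ : Set X)) →
      p.2 ≠ ∅ → q.2 ≠ ∅ → p ≠ q → p.1 ∩ q.1 = ∅ ∧ p.2 = S ∧ q.2 = S) := by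
  obtain ⟨hSPS, hNC1, hNC2, hNC3, hNC4, hNC5⟩ := h
  have hSne : S ≠ ∅ := (hSPS _ hmem).1
  obtain ⟨x, hxS⟩ := Set.nonempty_iff_ne_empty.2 hSne
  -- from a cover, extract S ⊆ p.1 ∨ S ⊆ p.2
  have hsub : ∀ p : Set X × Set X, SPCovers 𝒮 p (S, ∅) → S ⊆ p.1 ∨ S ⊆ p.2 := by
    intro p hp
    obtain ⟨_, _, ⟨hne, hcase⟩, _⟩ := hp
    simp only [Set.union_empty] at hcase
    rcases hcase with h1 | h2 | ⟨_, h3, h3'⟩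
    · exact Or.inl h1
    · exact Or.inr h2
    · exact absurd h3.symm h3'
  -- extract disjunction from ExactlyOne4
  have hEO : ∀ {a b c d : Prop}, ExactlyOne4 a b c d → a ∨ b ∨ c ∨ d := by
    intro a b c d h
    rcases h with ⟨h, _⟩ | ⟨_, h, _⟩ | ⟨_, _, h, _⟩ | ⟨_, _, _, h⟩ <;> tauto
  -- helper: if p covers (S,∅), p.2 ≠ ∅ and S ⊆ p.2 then S = p.2
  have hC : ∀ p : Set X × Set X, SPCovers 𝒮 p (S, ∅) → p.2 ≠ ∅ → S ⊆ p.2 → S = p.2 := by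
    intro p hp hp2 hSsub
    by_contra hne
    have hr : ((p.2, (∅ : Set X)) : Set X × Set X) ∈ 𝒮 := hNC3 p hp.1 hp2
    refine hp.2.2.2 ⟨(p.2, ∅), hr, ?_, ?_⟩
    · refine ⟨?_, Or.inl ?_⟩
      · intro hEq
        exact hne (congrArg Prod.fst hEq)
      · simpa using hSsub
    · refine ⟨?_, Or.inr (Or.inl ?_)⟩
      · intro hEq
        exact hp2 (congrArg Prod.snd hEq).symm
      · simp
  -- part (iii) as the key lemma
  have hiii : ∀ p q : Set X × Set X,
      SPCovers 𝒮 p (S, (∅ : Set X)) → SPCovers 𝒮 q (S, (∅ : Set X)) →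
      p.2 ≠ ∅ → q.2 ≠ ∅ → p ≠ q → p.1 ∩ q.1 = ∅ ∧ p.2 = S ∧ q.2 = S := by
    intro p q hp hq hp2 hq2 hpq
    rcases hEO (hNC4 p hp.1 q hq.1 hpq) with hlt | hlt | hdis | ⟨hdisj, heq, _⟩
    · exact absurd ⟨p, hp.1, hp.2.2.1, hlt⟩ hq.2.2.2
    · exact absurd ⟨q, hq.1, hq.2.2.1, hlt⟩ hp.2.2.2
    · exfalso
      have hxp : x ∈ p.1 ∪ p.2 := by
        rcases hsub p hp with h | h
        · exact Or.inl (h hxS)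
        · exact Or.inr (h hxS)
      have hxq : x ∈ q.1 ∪ q.2 := by
        rcases hsub q hq with h | h
        · exact Or.inl (h hxS)
        · exact Or.inr (h hxS)
      have : x ∈ (p.1 ∪ p.2) ∩ (q.1 ∪ q.2) := ⟨hxp, hxq⟩
      rw [hdis] at this
      exact this
    · have hpS : p.2 = S := by
        rcases hsub p hp with h1 | h2
        · rcases hsub q hq with g1 | g2
          · exfalso
            have : x ∈ p.1 ∩ q.1 := ⟨h1 hxS, g1 hxS⟩
            rw [hdisj] at this
            exact this
          · exfalso
            have hq2S : S = q.2 := hC q hq hq2 g2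
            have : x ∈ p.1 ∩ p.2 := ⟨h1 hxS, by rw [heq, ← hq2S]; exact hxS⟩
            rw [(hSPS p hp.1).2] at this
            exact this
        · exact (hC p hp hp2 h2).symm
      exact ⟨hdisj, hpS, heq ▸ hpS⟩
  refine ⟨?_, ?_, hiii⟩
  · -- part (i)
    intro p q hp hq hp2 hq2
    by_contra hpq
    rcases hEO (hNC4 p hp.1 q hq.1 hpq) with hlt | hlt | hdis | ⟨_, _, hne⟩
    · exact hq.2.2.2 ⟨p, hp.1, hp.2.2.1, hlt⟩
    · exact hp.2.2.2 ⟨q, hq.1, hq.2.2.1, hlt⟩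
    · have hSp : S ⊆ p.1 := by
        rcases hsub p hp with h | h
        · exact h
        · exact absurd (Set.subset_empty_iff.1 (hp2 ▸ h)) hSne
      have hSq : S ⊆ q.1 := by
        rcases hsub q hq with h | h
        · exact h
        · exact absurd (Set.subset_empty_iff.1 (hq2 ▸ h)) hSne
      have : x ∈ (p.1 ∪ p.2) ∩ (q.1 ∪ q.2) := ⟨Or.inl (hSp hxS), Or.inl (hSq hxS)⟩
      rw [hdis] at this
      exact this
    · exact hne hp2
  · -- part (ii)
    intro p q r hp hq hr hp2 hq2 hr2 hpq hpr hqr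
    obtain ⟨hdpq, hpS, hqS⟩ := hiii p q hp hq hp2 hq2 hpq
    obtain ⟨hdpr, _, hrS⟩ := hiii p r hp hr hp2 hr2 hpr
    obtain ⟨hdqr, _, _⟩ := hiii q r hq hr hq2 hr2 hqr
    refine hNC5 ⟨p, hp.1, q, hq.1, r, hr.1, hpS.trans hqS.symm, hqS.trans hrS.symm,
      hp2, hdpq, Or.inr ?_⟩
    rw [Set.union_inter_distrib_right, hdpr, hdqr, Set.union_empty]
end

section
/- Let 𝒮 be a 1-nested compatible set pair system on X. Then every (S,H) ∈ 𝒮 has at most two parents in D(𝒮) (i.e., indegree at most 2), and if (S,H) has two distinct parents (S₁,H₁) and (S₂,H₂), then H = ∅, H₁ = H₂ = S, and S₁ ∩ S₂ = ∅. -/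
open Set

variable {X : Type*}

lemma two_parents_aux {X : Type*} (𝒮 : Set (Set X × Set X)) (h : OneNestedCompatible 𝒮)
    (p a b : Set X × Set X) (ha : SPCovers 𝒮 a p) (hb : SPCovers 𝒮 b p) (hab : a ≠ b) :
    p.2 = ∅ ∧ a.2 = p.1 ∧ b.2 = p.1 ∧ a.1 ∩ b.1 = ∅ := by
  obtain ⟨hSPS, hNC1, hNC2, hNC3, hNC4, hNC5⟩ := h
  obtain ⟨haS, hpS, hpa, hna⟩ := ha
  obtain ⟨hbS, -, hpb, hnb⟩ := hb
  obtain ⟨hp1, hp2⟩ := hSPS p hpS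
  have hcon : p.1 ⊆ p.2 → False := by
    intro hs
    apply hp1
    rw [← subset_empty_iff, ← hp2]
    exact subset_inter Subset.rfl hs
  have hcon2 : ∀ q : Set X × Set X, q ∈ 𝒮 → p.1 ⊆ q.1 → p.1 ⊆ q.2 → False := by
    intro q hqS h1 h2
    apply hp1
    rw [← subset_empty_iff, ← (hSPS q hqS).2]
    exact subset_inter h1 h2
  have hnab : ¬ splt a b := fun hs => hnb ⟨a, haS, hpa, hs⟩
  have hnba : ¬ splt b a := fun hs => hna ⟨b, hbS, hpb, hs⟩
  have hpa1 : p.1 ⊆ a.1 ∪ a.2 := by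
    rcases hpa.2 with h1 | h1 | h1
    · exact (subset_union_left.trans h1).trans subset_union_left
    · exact (subset_union_left.trans h1).trans subset_union_right
    · exact h1.1.subset.trans subset_union_left
  have hpb1 : p.1 ⊆ b.1 ∪ b.2 := by
    rcases hpb.2 with h1 | h1 | h1
    · exact (subset_union_left.trans h1).trans subset_union_left
    · exact (subset_union_left.trans h1).trans subset_union_right
    · exact h1.1.subset.trans subset_union_left
  have hint : (a.1 ∪ a.2) ∩ (b.1 ∪ b.2) ≠ ∅ := by
    obtain ⟨x, hx⟩ := nonempty_iff_ne_empty.2 hp1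
    intro he
    have hmem : x ∈ (a.1 ∪ a.2) ∩ (b.1 ∪ b.2) := ⟨hpa1 hx, hpb1 hx⟩
    rw [he] at hmem
    exact hmem
  have hkey : a.1 ∩ b.1 = ∅ ∧ a.2 = b.2 ∧ a.2 ≠ ∅ := by
    rcases hNC4 a haS b hbS hab with ⟨h1,-⟩|⟨-,h1,-⟩|⟨-,-,h1,-⟩|⟨-,-,-,h1⟩
    · exact absurd h1 hnab
    · exact absurd h1 hnba
    · exact absurd h1 hint
    · exact h1
  obtain ⟨hab1, habH, hHne⟩ := hkey
  have hd : p.1 ⊆ a.1 → p.1 ⊆ b.1 → False := by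
    intro h1 h2
    apply hp1
    rw [← subset_empty_iff, ← hab1]
    exact subset_inter h1 h2
  have key : p.1 ∪ p.2 ⊆ a.2 → p.2 = ∅ ∧ a.2 = p.1 := by
    intro hsub
    have hHS : ((a.2, (∅ : Set X)) : Set X × Set X) ∈ 𝒮 := hNC3 a haS hHne
    have hpeq : p = (a.2, ∅) := by
      by_contra hne
      apply hna
      refine ⟨(a.2, ∅), hHS, ⟨hne, Or.inl hsub⟩, ⟨?_, Or.inr (Or.inl ?_)⟩⟩
      · intro heq
        exact hHne (congrArg Prod.snd heq).symm
      · simp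
    refine ⟨?_, ?_⟩ <;> rw [hpeq]
  rcases hpa.2 with h1 | h1 | h1 <;> rcases hpb.2 with h2 | h2 | h2
  · exact absurd (hd (subset_union_left.trans h1) (subset_union_left.trans h2)) id
  · exact absurd (hcon2 a haS (subset_union_left.trans h1)
      (by rw [habH]; exact subset_union_left.trans h2)) id
  · exact absurd (hd (subset_union_left.trans h1) h2.1.subset) id
  · exact absurd (hcon2 b hbS (subset_union_left.trans h2)
      (by rw [← habH]; exact subset_union_left.trans h1)) id
  · obtain ⟨hpe, haH⟩ := key h1
    exact ⟨hpe, haH, by rw [← habH]; exact haH, hab1⟩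
  · exact absurd (hcon (by rw [h2.2.1, ← habH]; exact subset_union_left.trans h1)) id
  · exact absurd (hd h1.1.subset (subset_union_left.trans h2)) id
  · exact absurd (hcon (by rw [h1.2.1, habH]; exact subset_union_left.trans h2)) id
  · exact absurd (hd h1.1.subset h2.1.subset) id

/-- If `𝒮` is 1-nested compatible, every `(S,H) ∈ 𝒮` has at most two parents
in `D(𝒮)`, and if `(S,H)` has two distinct parents `(S₁,H₁)` and `(S₂,H₂)` then `H = ∅`,
`H₁ = H₂ = S` and `S₁ ∩ S₂ = ∅`. -/
theorem indegree_at_most_two {X : Type*} [Fintype X] [Nonempty X]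
    (𝒮 : Set (Set X × Set X)) (h : OneNestedCompatible 𝒮) :
    ∀ p ∈ 𝒮,
      (∀ a b c : Set X × Set X, SPCovers 𝒮 a p → SPCovers 𝒮 b p → SPCovers 𝒮 c p →
        a ≠ b → a ≠ c → b ≠ c → False) ∧
      (∀ a b : Set X × Set X, SPCovers 𝒮 a p → SPCovers 𝒮 b p → a ≠ b →
        p.2 = ∅ ∧ a.2 = p.1 ∧ b.2 = p.1 ∧ a.1 ∩ b.1 = ∅) := by
  intro p hpS
  refine ⟨?_, fun a b ha hb hab => two_parents_aux 𝒮 h p a b ha hb hab⟩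
  intro a b c ha hb hc hab hac hbc
  obtain ⟨hpe, haH, hbH, habI⟩ := two_parents_aux 𝒮 h p a b ha hb hab
  obtain ⟨-, -, hcH, hacI⟩ := two_parents_aux 𝒮 h p a c ha hc hac
  obtain ⟨-, -, -, hbcI⟩ := two_parents_aux 𝒮 h p b c hb hc hbc
  obtain ⟨hSPS, -, -, -, -, hNC5⟩ := h
  have hp1 := (hSPS p hpS).1
  apply hNC5
  refine ⟨a, ha.1, b, hb.1, c, hc.1, ?_, ?_, ?_, habI, Or.inr ?_⟩
  · rw [haH, hbH]
  · rw [hbH, hcH]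
  · rw [haH]; exact hp1
  · rw [union_inter_distrib_right, hacI, hbcI, union_empty]
end

section
/- Let 𝒮 be a 1-nested compatible set pair system on X, let (S,H) ∈ 𝒮 with H ≠ ∅, and let (S₂,H₂) be the unique ≤-minimal element of {(S',H') ∈ 𝒮 : (S,H) < (S',H') and H' ≠ H}. Then both of the sets {(S',H') ∈ 𝒮 : (H,∅) < (S',H') < (S,H)} and {(S'',H'') ∈ 𝒮 : (S,H) < (S'',H'') < (S₂,H₂)} are totally ordered by ≤ (any two of their elements are comparable). -/
open Set

variable {X : Type*}

lemma lower_char {X : Type*} (𝒮 : Set (Set X × Set X)) (h : OneNestedCompatible 𝒮)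
    (S H : Set X) (hmem : ((S, H) : Set X × Set X) ∈ 𝒮) (hH : H ≠ ∅)
    (a : Set X × Set X) (ha : a ∈ 𝒮)
    (h1 : splt ((H, (∅ : Set X)) : Set X × Set X) a)
    (h2 : splt a ((S, H) : Set X × Set X)) :
    a.2 = H ∧ a.1 ⊆ S := by
  obtain ⟨hSne, hSH⟩ := h.1 _ hmem
  obtain ⟨hane, haint⟩ := h.1 _ ha
  simp only at hSne hSH hane haint
  obtain ⟨hne1, hc1⟩ := h1
  obtain ⟨hne2, hc2⟩ := h2
  simp only [Set.union_empty] at hc1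
  have hHa : H ⊆ a.1 ∨ H ⊆ a.2 := by
    rcases hc1 with hx | hx | ⟨_, hx, hx'⟩
    · exact Or.inl hx
    · exact Or.inr hx
    · exact absurd hx.symm hx'
  rcases hc2 with hc | hc | ⟨hs, hh, _⟩
  · exfalso
    apply hH
    have hHS : H ⊆ S := by
      rcases hHa with hx | hx
      · exact (hx.trans Set.subset_union_left).trans hc
      · exact (hx.trans Set.subset_union_right).trans hc
    have : H ⊆ S ∩ H := Set.subset_inter hHS Set.Subset.rfl
    rw [hSH] at this
    exact Set.subset_empty_iff.mp this
  · rcases hHa with hx | hx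
    · exfalso
      have ha1 : a.1 = H :=
        Set.Subset.antisymm (Set.subset_union_left.trans hc) hx
      have ha2 : a.2 = ∅ := by
        have : a.2 ⊆ a.1 ∩ a.2 :=
          Set.subset_inter (by rw [ha1]; exact Set.subset_union_right.trans hc) Set.Subset.rfl
        rw [haint] at this
        exact Set.subset_empty_iff.mp this
      exact hne1 (Prod.ext_iff.mpr ⟨ha1, ha2⟩).symm
    · exfalso
      have ha2 : a.2 = H :=
        Set.Subset.antisymm (Set.subset_union_right.trans hc) hx
      have ha1 : a.1 = ∅ := by
        have : a.1 ⊆ a.1 ∩ a.2 :=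
          Set.subset_inter Set.Subset.rfl (by rw [ha2]; exact Set.subset_union_left.trans hc)
        rw [haint] at this
        exact Set.subset_empty_iff.mp this
      exact hane ha1
  · exact ⟨hh, hs.subset⟩

lemma upper_char {X : Type*} (𝒮 : Set (Set X × Set X)) (h : OneNestedCompatible 𝒮)
    (S H : Set X) (hmem : ((S, H) : Set X × Set X) ∈ 𝒮) (hH : H ≠ ∅)
    (q₂ : Set X × Set X)
    (hq₂min : ∀ r ∈ 𝒮, splt ((S, H) : Set X × Set X) r ∧ r.2 ≠ H → sple r q₂ → r = q₂)
    (a : Set X × Set X) (ha : a ∈ 𝒮)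
    (h1 : splt ((S, H) : Set X × Set X) a)
    (h2 : splt a q₂) :
    a.2 = H ∧ S ⊆ a.1 := by
  obtain ⟨hSne, hSH⟩ := h.1 _ hmem
  obtain ⟨hane, haint⟩ := h.1 _ ha
  simp only at hSne hSH hane haint
  have haH : a.2 = H := by
    by_contra hne
    exact h2.1 (hq₂min a ha ⟨h1, hne⟩ (Or.inl h2))
  refine ⟨haH, ?_⟩
  obtain ⟨hne1, hc1⟩ := h1
  rcases hc1 with hc | hc | ⟨hs, _, _⟩
  · exfalso
    apply hH
    have : H ⊆ a.1 ∩ a.2 :=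
      Set.subset_inter (Set.subset_union_right.trans hc) (by rw [haH])
    rw [haint] at this
    exact Set.subset_empty_iff.mp this
  · exfalso
    apply hSne
    have : S ⊆ S ∩ H := Set.subset_inter Set.Subset.rfl
      (by rw [← haH]; exact Set.subset_union_left.trans hc)
    rw [hSH] at this
    exact Set.subset_empty_iff.mp this
  · exact hs.subset

/-- If `𝒮` is 1-nested compatible, `(S,H) ∈ 𝒮` with `H ≠ ∅`, and `(S₂,H₂)` is the
unique `≤`-minimal element of `{(S',H') ∈ 𝒮 : (S,H) < (S',H'), H' ≠ H}`, then both
`{(S',H') ∈ 𝒮 : (H,∅) < (S',H') < (S,H)}` and `{(S'',H'') ∈ 𝒮 : (S,H) < (S'',H'') < (S₂,H₂)}`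
are totally ordered by `≤`. -/
theorem intervals_totally_ordered {X : Type*} [Fintype X] [Nonempty X]
    (𝒮 : Set (Set X × Set X)) (h : OneNestedCompatible 𝒮)
    (S H : Set X) (hmem : ((S, H) : Set X × Set X) ∈ 𝒮) (hH : H ≠ ∅)
    (q₂ : Set X × Set X) (hq₂ : q₂ ∈ 𝒮)
    (hq₂M : splt ((S, H) : Set X × Set X) q₂ ∧ q₂.2 ≠ H)
    (hq₂min : ∀ r ∈ 𝒮, splt ((S, H) : Set X × Set X) r ∧ r.2 ≠ H → sple r q₂ → r = q₂) :
    (∀ a ∈ 𝒮, ∀ b ∈ 𝒮,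
      splt ((H, (∅ : Set X)) : Set X × Set X) a → splt a ((S, H) : Set X × Set X) →
      splt ((H, (∅ : Set X)) : Set X × Set X) b → splt b ((S, H) : Set X × Set X) →
      sple a b ∨ sple b a) ∧
    (∀ a ∈ 𝒮, ∀ b ∈ 𝒮,
      splt ((S, H) : Set X × Set X) a → splt a q₂ →
      splt ((S, H) : Set X × Set X) b → splt b q₂ →
      sple a b ∨ sple b a) := by
  obtain ⟨hSne, hSH⟩ := h.1 _ hmem
  simp only at hSne hSH
  obtain ⟨x, hx⟩ := Set.nonempty_iff_ne_empty.mpr hH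
  constructor
  · intro a ha b hb h1a h2a h1b h2b
    by_cases hab : a = b
    · exact Or.inl (Or.inr hab)
    obtain ⟨haH, haS⟩ := lower_char 𝒮 h S H hmem hH a ha h1a h2a
    obtain ⟨hbH, hbS⟩ := lower_char 𝒮 h S H hmem hH b hb h1b h2b
    rcases h.2.2.2.2.1 a ha b hb hab with ⟨hc, _⟩ | ⟨_, hc, _⟩ | ⟨_, _, hc, _⟩ | ⟨_, _, _, hc⟩
    · exact Or.inl (Or.inl hc)
    · exact Or.inr (Or.inl hc)
    · exfalso
      have hxa : x ∈ (a.1 ∪ a.2) ∩ (b.1 ∪ b.2) :=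
        ⟨Or.inr (haH ▸ hx), Or.inr (hbH ▸ hx)⟩
      rw [hc] at hxa
      exact hxa
    · exact absurd ⟨a, ha, b, hb, ((S, H) : Set X × Set X), hmem,
        haH.trans hbH.symm, hbH, haH ▸ hH, hc.1, Or.inl (Set.union_subset haS hbS)⟩ h.2.2.2.2.2
  · intro a ha b hb h1a h2a h1b h2b
    by_cases hab : a = b
    · exact Or.inl (Or.inr hab)
    obtain ⟨haH, haS⟩ := upper_char 𝒮 h S H hmem hH q₂ hq₂min a ha h1a h2a
    obtain ⟨hbH, hbS⟩ := upper_char 𝒮 h S H hmem hH q₂ hq₂min b hb h1b h2b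
    rcases h.2.2.2.2.1 a ha b hb hab with ⟨hc, _⟩ | ⟨_, hc, _⟩ | ⟨_, _, hc, _⟩ | ⟨_, _, _, hc⟩
    · exact Or.inl (Or.inl hc)
    · exact Or.inr (Or.inl hc)
    · exfalso
      have hxa : x ∈ (a.1 ∪ a.2) ∩ (b.1 ∪ b.2) :=
        ⟨Or.inr (haH ▸ hx), Or.inr (hbH ▸ hx)⟩
      rw [hc] at hxa
      exact hxa
    · exfalso
      apply hSne
      have : S ⊆ a.1 ∩ b.1 := Set.subset_inter haS hbS
      rw [hc.1] at this
      exact Set.subset_empty_iff.mp this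
end

section
/- Let 𝒮 be a 1-nested compatible set pair system on X. For any three elements (S,H), (S',H), (S'',H) ∈ 𝒮 with the same second component H ≠ ∅, at least two of the three directed paths P(S,H), P(S',H), P(S'',H) coincide (are equal as sequences). -/
open Set

variable {X : Type*}

section MyHelpers

variable {𝒮 : Set (Set X × Set X)}

private lemma getElem_idx {α : Type*} {L : List α} {i j : ℕ} (h : i = j) {hi : i < L.length} :
    L[i]'hi = L[j]'(h ▸ hi) := by subst h; rfl

private lemma nonempty_not_sub {A B C : Set X} (hA : A ≠ ∅) (hAB : A ⊆ B) (hAC : A ⊆ C)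
    (hBC : B ∩ C = ∅) : False := by
  obtain ⟨x, hx⟩ := Set.nonempty_iff_ne_empty.2 hA
  have hm : x ∈ B ∩ C := ⟨hAB hx, hAC hx⟩
  rw [hBC] at hm
  exact hm

lemma sps_ne (h : OneNestedCompatible 𝒮) {p : Set X × Set X} (hp : p ∈ 𝒮) : p.1 ≠ ∅ :=
  (h.1 p hp).1

lemma sps_disj (h : OneNestedCompatible 𝒮) {p : Set X × Set X} (hp : p ∈ 𝒮) : p.1 ∩ p.2 = ∅ :=
  (h.1 p hp).2

lemma sameH_splt (h : OneNestedCompatible 𝒮) {p q : Set X × Set X} (hp : p ∈ 𝒮) (hq : q ∈ 𝒮)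
    (h2 : p.2 = q.2) (hne : q.2 ≠ ∅) : splt p q ↔ p.1 ⊂ q.1 := by
  constructor
  · rintro ⟨hpq, hc | hc | hc⟩
    · exfalso
      have h1 : p.2 ⊆ q.1 := (Set.subset_union_right).trans hc
      rw [h2] at h1
      exact nonempty_not_sub hne h1 (fun x hx => hx) (sps_disj h hq)
    · exfalso
      have h1 : p.1 ⊆ q.2 := (Set.subset_union_left).trans hc
      rw [← h2] at h1
      exact nonempty_not_sub (sps_ne h hp) (fun x hx => hx) h1 (sps_disj h hp)
    · exact hc.1
  · intro hss
    exact ⟨fun e => hss.ne (congrArg Prod.fst e), Or.inr (Or.inr ⟨hss, h2, hne⟩)⟩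

lemma sameH_cases (h : OneNestedCompatible 𝒮) {p q : Set X × Set X} (hp : p ∈ 𝒮) (hq : q ∈ 𝒮)
    (h2 : p.2 = q.2) (hne : p.2 ≠ ∅) :
    p = q ∨ p.1 ⊂ q.1 ∨ q.1 ⊂ p.1 ∨ p.1 ∩ q.1 = ∅ := by
  by_cases hpq : p = q
  · exact Or.inl hpq
  rcases h.2.2.2.2.1 p hp q hq hpq with ⟨h1, _⟩ | ⟨_, h1, _⟩ | ⟨_, _, h1, _⟩ | ⟨_, _, _, h1⟩
  · exact Or.inr (Or.inl ((sameH_splt h hp hq h2 (h2 ▸ hne)).1 h1))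
  · exact Or.inr (Or.inr (Or.inl ((sameH_splt h hq hp h2.symm hne).1 h1)))
  · exfalso
    exact nonempty_not_sub hne (fun x hx => Or.inr hx)
      (fun x hx => Or.inr (by rw [← h2]; exact hx)) h1
  · exact Or.inr (Or.inr (Or.inr h1.1))

lemma lt_head (h : OneNestedCompatible 𝒮) {H : Set X} (hH : H ≠ ∅)
    {p c t : Set X × Set X} (hp : p ∈ 𝒮) (hHp : H ⊆ p.1) (hp2 : p.2 ≠ H)
    (hc : c ∈ 𝒮) (hc2 : c.2 = H) (hcp : splt c p)
    (ht : t ∈ 𝒮) (ht2 : t.2 = H) : splt t p := by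
  have hpt : p ≠ t := fun e => hp2 (by rw [e, ht2])
  rcases h.2.2.2.2.1 p hp t ht hpt with ⟨h1, _⟩ | ⟨_, h1, _⟩ | ⟨_, _, h1, _⟩ | ⟨_, _, _, h1⟩
  · exfalso
    rcases h1.2 with hx | hx | hx
    · exact nonempty_not_sub hH (fun y hy => hx (Or.inl (hHp hy)))
        (fun y hy => by rw [ht2]; exact hy) (sps_disj h ht)
    · have hpH : p.1 ⊆ H := fun y hy => by rw [← ht2]; exact hx (Or.inl hy)
      have hp2H : p.2 ⊆ H := fun y hy => by rw [← ht2]; exact hx (Or.inr hy)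
      rcases hcp.2 with hy | hy | hy
      · refine nonempty_not_sub (sps_ne h hc) (fun z hz => hz) ?_ (sps_disj h hc)
        intro z hz
        rw [hc2]
        exact hpH (hy (Or.inl hz))
      · refine nonempty_not_sub (sps_ne h hc) (fun z hz => hz) ?_ (sps_disj h hc)
        intro z hz
        rw [hc2]
        exact hp2H (hy (Or.inl hz))
      · exact hp2 (hy.2.1 ▸ hc2)
    · exact hp2 (hx.2.1.trans ht2)
  · exact h1
  · exact absurd h1 (by
      intro hd
      exact nonempty_not_sub hH (fun y hy => Or.inl (hHp hy))
        (fun y hy => Or.inr (by rw [ht2]; exact hy)) hd)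
  · exact absurd (h1.2.1.trans ht2) hp2

end MyHelpers

section PathFacts

variable {𝒮 : Set (Set X × Set X)} {S H : Set X} {L : List (Set X × Set X)}

lemma path_cover (hL : IsSPPath 𝒮 S H L) {i : ℕ} (hi : i + 1 < L.length) :
    SPCovers 𝒮 (L[i]'(by omega)) (L[i+1]'hi) := by
  have := List.isChain_iff_getElem.1 hL.2.1 i (by omega)
  simpa using this

lemma path_mem (hL : IsSPPath 𝒮 S H L) {i : ℕ} (hi : i < L.length) : L[i]'hi ∈ 𝒮 := by
  rcases Nat.lt_or_ge (i + 1) L.length with h' | h'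
  · exact (path_cover hL h').1
  · have h0 : L.length - 2 + 1 < L.length := by have := hL.1; omega
    have hm := (path_cover hL h0).2.1
    have he : L.length - 2 + 1 = i := by omega
    exact (getElem_idx he) ▸ hm

lemma path_last (hL : IsSPPath 𝒮 S H L) :
    L[L.length - 1]'(by have := hL.1; omega) = ((H, (∅ : Set X)) : Set X × Set X) := by
  have hl := hL.2.2.1
  rw [List.getLast?_eq_getElem?, List.getElem?_eq_getElem (by have := hL.1; omega)] at hl
  exact Option.some_injective _ hl

lemma path_interior (hL : IsSPPath 𝒮 S H L) {i : ℕ} (h1 : 1 ≤ i) (hi : i + 1 < L.length) :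
    (L[i]'(by omega)).2 = H :=
  hL.2.2.2.1 i _ h1 hi (List.getElem?_eq_getElem (by omega))

lemma path_head (hL : IsSPPath 𝒮 S H L) :
    S ∪ H ⊆ (L[0]'(by have := hL.1; omega)).1 ∧ (L[0]'(by have := hL.1; omega)).2 ≠ H := by
  obtain ⟨p, hp, h1, h2⟩ := hL.2.2.2.2.2
  rw [List.head?_eq_getElem?, List.getElem?_eq_getElem (by have := hL.1; omega)] at hp
  have := Option.some_injective _ hp
  rw [this]
  exact ⟨h1, h2⟩

lemma path_mono (h : OneNestedCompatible 𝒮) (hH : H ≠ ∅) (hL : IsSPPath 𝒮 S H L) :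
    ∀ i, 1 ≤ i → ∀ (hi : i + 1 < L.length),
      (L[i]'(by omega)).1 ⊆ (L[1]'(by have := hL.1; omega)).1 := by
  intro i
  induction i with
  | zero => omega
  | succ j ih =>
    intro _ hi
    rcases Nat.eq_zero_or_pos j with rfl | hj1
    · exact subset_rfl
    · have hj : j + 1 < L.length := by omega
      have hcov := path_cover hL hj
      have hsub : (L[j+1]'hj).1 ⊂ (L[j]'(by omega)).1 :=
        (sameH_splt h (path_mem hL hj) (path_mem hL (by omega))
          (by rw [path_interior hL (by omega) hi, path_interior hL hj1 hj])
          (by rw [path_interior hL hj1 hj]; exact hH)).1 hcov.2.2.1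
      exact hsub.subset.trans (ih hj1 hj)

lemma path_anchor (hL : IsSPPath 𝒮 S H L) :
    ∃ i, ∃ (h1 : 1 ≤ i) (hi : i + 1 < L.length),
      L[i]'(by omega) = ((S, H) : Set X × Set X) := by
  obtain ⟨i, h1, hi, hp⟩ := hL.2.2.2.2.1
  rw [List.getElem?_eq_some_iff] at hp
  exact ⟨i, h1, hi, hp.2⟩

lemma path_anchor_sub (h : OneNestedCompatible 𝒮) (hH : H ≠ ∅) (hL : IsSPPath 𝒮 S H L) :
    S ⊆ (L[1]'(by have := hL.1; omega)).1 := by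
  obtain ⟨i, h1, hi, he⟩ := path_anchor hL
  have hm := path_mono h hH hL i h1 hi
  rw [he] at hm
  exact hm

lemma path_anchor_mem (hL : IsSPPath 𝒮 S H L) : ((S, H) : Set X × Set X) ∈ 𝒮 := by
  obtain ⟨i, h1, hi, he⟩ := path_anchor hL
  exact he ▸ path_mem hL (by omega)

end PathFacts

lemma paths_eq {𝒮 : Set (Set X × Set X)} (h : OneNestedCompatible 𝒮) {S S' H : Set X}
    (hH : H ≠ ∅) (hss : S ⊆ S' ∨ S' ⊆ S)
    {L L' : List (Set X × Set X)} (hL : IsSPPath 𝒮 S H L) (hL' : IsSPPath 𝒮 S' H L') :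
    L = L' := by
  have hn := hL.1
  have hn' := hL'.1
  -- the two top interior elements are comparable
  have htop : (L[1]'(by omega)).1 ⊆ (L'[1]'(by omega)).1 ∨
      (L'[1]'(by omega)).1 ⊆ (L[1]'(by omega)).1 := by
    have hS1 : S ⊆ (L[1]'(by omega)).1 := path_anchor_sub h hH hL
    have hS'1 : S' ⊆ (L'[1]'(by omega)).1 := path_anchor_sub h hH hL'
    have hSne : S ≠ ∅ := sps_ne h (path_anchor_mem hL)
    have hSS' : (S ∩ S').Nonempty := by
      obtain ⟨x, hx⟩ := Set.nonempty_iff_ne_empty.2 hSne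
      rcases hss with hx' | hx'
      · exact ⟨x, hx, hx' hx⟩
      · obtain ⟨y, hy⟩ := Set.nonempty_iff_ne_empty.2 (sps_ne h (path_anchor_mem hL'))
        exact ⟨y, hx' hy, hy⟩
    have h2L : (L[1]'(by omega)).2 = H := path_interior hL le_rfl (by omega)
    have h2L' : (L'[1]'(by omega)).2 = H := path_interior hL' le_rfl (by omega)
    rcases sameH_cases h (path_mem hL (by omega : (1:ℕ) < L.length))
        (path_mem hL' (by omega : (1:ℕ) < L'.length))
        (by rw [h2L, h2L']) (by rw [h2L]; exact hH) with he | hc | hc | hd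
    · exact Or.inl (by rw [he])
    · exact Or.inl hc.subset
    · exact Or.inr hc.subset
    · exfalso
      obtain ⟨x, hx⟩ := hSS'
      have hm : x ∈ (L[1]'(by omega)).1 ∩ (L'[1]'(by omega)).1 := ⟨hS1 hx.1, hS'1 hx.2⟩
      rw [hd] at hm
      exact hm
  -- main claim: lists agree from the bottom
  have claim : ∀ t, ∀ (h1 : t + 1 ≤ L.length) (h2 : t + 1 ≤ L'.length),
      L[L.length - 1 - t]'(by omega) = L'[L'.length - 1 - t]'(by omega) := by
    intro t
    induction t with
    | zero =>
      intro _ _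
      rw [getElem_idx (show L.length - 1 - 0 = L.length - 1 by omega),
        getElem_idx (show L'.length - 1 - 0 = L'.length - 1 by omega),
        path_last hL, path_last hL']
    | succ t ih =>
      intro h1 h2
      have hc := ih (by omega) (by omega)
      have ei : L.length - 1 - (t + 1) = L.length - 2 - t := by omega
      have ei' : L'.length - 1 - (t + 1) = L'.length - 2 - t := by omega
      have fi : L.length - 2 - t + 1 = L.length - 1 - t := by omega
      have fi' : L'.length - 2 - t + 1 = L'.length - 1 - t := by omega
      rw [getElem_idx ei, getElem_idx ei']
      have hcovL := path_cover hL (show L.length - 2 - t + 1 < L.length by omega)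
      have hcovL' := path_cover hL' (show L'.length - 2 - t + 1 < L'.length by omega)
      rw [getElem_idx fi] at hcovL
      rw [getElem_idx fi', ← hc] at hcovL'
      -- now hcovL : SPCovers 𝒮 p c, hcovL' : SPCovers 𝒮 p' c with the same child c
      by_cases hpp' : L[L.length - 2 - t]'(by omega) = L'[L'.length - 2 - t]'(by omega)
      · exact hpp'
      exfalso
      by_cases hp0 : L.length - 2 - t = 0 <;> by_cases hp'0 : L'.length - 2 - t = 0
      · -- both parents are heads
        have hHp : H ⊆ (L[L.length - 2 - t]'(by omega)).1 := by
          rw [getElem_idx hp0]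
          exact fun y hy => (path_head hL).1 (Or.inr hy)
        have hHp' : H ⊆ (L'[L'.length - 2 - t]'(by omega)).1 := by
          rw [getElem_idx hp'0]
          exact fun y hy => (path_head hL').1 (Or.inr hy)
        rcases h.2.2.2.2.1 _ hcovL.1 _ hcovL'.1 hpp' with
          ⟨hx, _⟩ | ⟨_, hx, _⟩ | ⟨_, _, hx, _⟩ | ⟨_, _, _, hx⟩
        · exact hcovL'.2.2.2 ⟨_, hcovL.1, hcovL.2.2.1, hx⟩
        · exact hcovL.2.2.2 ⟨_, hcovL'.1, hcovL'.2.2.1, hx⟩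
        · exact nonempty_not_sub hH (fun y hy => Or.inl (hHp hy))
            (fun y hy => Or.inl (hHp' hy)) hx
        · exact nonempty_not_sub hH hHp hHp' hx.1
      · -- p head, p' interior
        have ht : 1 ≤ t := by omega
        have hcH : (L[L.length - 1 - t]'(by omega)).2 = H :=
          path_interior hL (by omega) (by omega)
        have hp'H : (L'[L'.length - 2 - t]'(by omega)).2 = H :=
          path_interior hL' (by omega) (by omega)
        have hs : splt (L'[L'.length - 2 - t]'(by omega)) (L[L.length - 2 - t]'(by omega)) := by
          refine lt_head h hH hcovL.1 ?_ ?_ hcovL.2.1 hcH hcovL.2.2.1 hcovL'.1 hp'H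
          · rw [getElem_idx hp0]
            exact fun y hy => (path_head hL).1 (Or.inr hy)
          · rw [getElem_idx hp0]
            exact (path_head hL).2
        exact hcovL.2.2.2 ⟨_, hcovL'.1, hcovL'.2.2.1, hs⟩
      · -- p interior, p' head
        have ht : 1 ≤ t := by omega
        have hcH : (L[L.length - 1 - t]'(by omega)).2 = H :=
          path_interior hL (by omega) (by omega)
        have hpH : (L[L.length - 2 - t]'(by omega)).2 = H :=
          path_interior hL (by omega) (by omega)
        have hs : splt (L[L.length - 2 - t]'(by omega)) (L'[L'.length - 2 - t]'(by omega)) := by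
          refine lt_head h hH hcovL'.1 ?_ ?_ hcovL'.2.1 hcH hcovL'.2.2.1 hcovL.1 hpH
          · rw [getElem_idx hp'0]
            exact fun y hy => (path_head hL').1 (Or.inr hy)
          · rw [getElem_idx hp'0]
            exact (path_head hL').2
        exact hcovL'.2.2.2 ⟨_, hcovL.1, hcovL.2.2.1, hs⟩
      · -- both parents interior
        have hpH : (L[L.length - 2 - t]'(by omega)).2 = H :=
          path_interior hL (by omega) (by omega)
        have hp'H : (L'[L'.length - 2 - t]'(by omega)).2 = H :=
          path_interior hL' (by omega) (by omega)
        rcases sameH_cases h hcovL.1 hcovL'.1 (by rw [hpH, hp'H]) (by rw [hpH]; exact hH)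
          with he | hx | hx | hd
        · exact hpp' he
        · exact hcovL'.2.2.2 ⟨_, hcovL.1, hcovL.2.2.1,
            (sameH_splt h hcovL.1 hcovL'.1 (by rw [hpH, hp'H]) (by rw [hp'H]; exact hH)).2 hx⟩
        · exact hcovL.2.2.2 ⟨_, hcovL'.1, hcovL'.2.2.1,
            (sameH_splt h hcovL'.1 hcovL.1 (by rw [hpH, hp'H]) (by rw [hpH]; exact hH)).2 hx⟩
        · -- disjoint interiors: contradict NC5 via the larger top
          have hmono : (L[L.length - 2 - t]'(by omega)).1 ⊆ (L[1]'(by omega)).1 :=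
            path_mono h hH hL _ (by omega) (by omega)
          have hmono' : (L'[L'.length - 2 - t]'(by omega)).1 ⊆ (L'[1]'(by omega)).1 :=
            path_mono h hH hL' _ (by omega) (by omega)
          have h2L : (L[1]'(by omega)).2 = H := path_interior hL le_rfl (by omega)
          have h2L' : (L'[1]'(by omega)).2 = H := path_interior hL' le_rfl (by omega)
          rcases htop with hr | hr
          · exact h.2.2.2.2.2 ⟨_, hcovL.1, _, hcovL'.1, _, path_mem hL' (by omega : (1:ℕ) < L'.length),
              by rw [hpH, hp'H], by rw [hp'H, h2L'], by rw [hpH]; exact hH, hd,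
              Or.inl (Set.union_subset (hmono.trans hr) hmono')⟩
          · exact h.2.2.2.2.2 ⟨_, hcovL.1, _, hcovL'.1, _, path_mem hL (by omega : (1:ℕ) < L.length),
              by rw [hpH, hp'H], by rw [hp'H, h2L], by rw [hpH]; exact hH, hd,
              Or.inl (Set.union_subset hmono (hmono'.trans hr))⟩
  -- lengths are equal
  have hlen : L.length = L'.length := by
    rcases Nat.lt_trichotomy L.length L'.length with hlt | heq | hlt
    · exfalso
      have hcl := claim (L.length - 1) (by omega) (by omega)
      rw [getElem_idx (show L.length - 1 - (L.length - 1) = 0 by omega)] at hcl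
      have h2H : (L'[L'.length - 1 - (L.length - 1)]'(by omega)).2 = H :=
        path_interior hL' (by omega) (by omega)
      rw [← hcl] at h2H
      exact (path_head hL).2 h2H
    · exact heq
    · exfalso
      have hcl := claim (L'.length - 1) (by omega) (by omega)
      rw [getElem_idx (show L'.length - 1 - (L'.length - 1) = 0 by omega)] at hcl
      have h2H : (L[L.length - 1 - (L'.length - 1)]'(by omega)).2 = H :=
        path_interior hL (by omega) (by omega)
      rw [hcl] at h2H
      exact (path_head hL').2 h2H
  -- conclude by extensionality
  apply List.ext_getElem hlen
  intro i hi1 hi2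
  have hcl := claim (L.length - 1 - i) (by omega) (by omega)
  rw [getElem_idx (show L.length - 1 - (L.length - 1 - i) = i by omega),
    getElem_idx (show L'.length - 1 - (L.length - 1 - i) = i by omega)] at hcl
  exact hcl

/-- If `𝒮` is 1-nested compatible, then for any three elements `(S,H)`, `(S',H)`,
`(S'',H) ∈ 𝒮` with the same second component `H ≠ ∅`, at least two of the directed paths
`P(S,H)`, `P(S',H)`, `P(S'',H)` coincide. -/
theorem two_paths_coincide {X : Type*} [Fintype X] [Nonempty X]
    (𝒮 : Set (Set X × Set X)) (h : OneNestedCompatible 𝒮)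
    (S S' S'' H : Set X) (hH : H ≠ ∅)
    (hmem : ((S, H) : Set X × Set X) ∈ 𝒮) (hmem' : ((S', H) : Set X × Set X) ∈ 𝒮)
    (hmem'' : ((S'', H) : Set X × Set X) ∈ 𝒮)
    (L L' L'' : List (Set X × Set X))
    (hL : IsSPPath 𝒮 S H L) (hL' : IsSPPath 𝒮 S' H L') (hL'' : IsSPPath 𝒮 S'' H L'') :
    L = L' ∨ L = L'' ∨ L' = L'' := by
  have key : ∀ {A B : Set X}, ((A, H) : Set X × Set X) = ((B, H) : Set X × Set X) ∨
      ((A, H) : Set X × Set X).1 ⊂ ((B, H) : Set X × Set X).1 ∨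
      ((B, H) : Set X × Set X).1 ⊂ ((A, H) : Set X × Set X).1 → A ⊆ B ∨ B ⊆ A := by
    rintro A B (he | hc | hc)
    · exact Or.inl (by rw [show A = B from congrArg Prod.fst he])
    · exact Or.inl hc.subset
    · exact Or.inr hc.subset
  rcases sameH_cases h hmem hmem' rfl hH with h12 | h12 | h12 | h12
  · exact Or.inl (paths_eq h hH (key (Or.inl h12)) hL hL')
  · exact Or.inl (paths_eq h hH (key (Or.inr (Or.inl h12))) hL hL')
  · exact Or.inl (paths_eq h hH (key (Or.inr (Or.inr h12))) hL hL')
  rcases sameH_cases h hmem hmem'' rfl hH with h13 | h13 | h13 | h13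
  · exact Or.inr (Or.inl (paths_eq h hH (key (Or.inl h13)) hL hL''))
  · exact Or.inr (Or.inl (paths_eq h hH (key (Or.inr (Or.inl h13))) hL hL''))
  · exact Or.inr (Or.inl (paths_eq h hH (key (Or.inr (Or.inr h13))) hL hL''))
  rcases sameH_cases h hmem' hmem'' rfl hH with h23 | h23 | h23 | h23
  · exact Or.inr (Or.inr (paths_eq h hH (key (Or.inl h23)) hL' hL''))
  · exact Or.inr (Or.inr (paths_eq h hH (key (Or.inr (Or.inl h23))) hL' hL''))
  · exact Or.inr (Or.inr (paths_eq h hH (key (Or.inr (Or.inr h23))) hL' hL''))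
  · exfalso
    refine h.2.2.2.2.2 ⟨(S, H), hmem, (S', H), hmem', (S'', H), hmem'', rfl, rfl, hH, h12,
      Or.inr ?_⟩
    show (S ∪ S') ∩ S'' = ∅
    rw [Set.union_inter_distrib_right]
    rw [show S ∩ S'' = ∅ from h13, show S' ∩ S'' = ∅ from h23, Set.union_empty]
end

section
/- Let 𝒮 be a 1-nested compatible set pair system on X. For any three elements (S₁,H), (S₂,H), (S₃,H) ∈ 𝒮 with the same second component H ≠ ∅, at least two of them are comparable under ≤ (i.e., there exist i ≠ j with (S_i,H) ≤ (S_j,H) or (S_j,H) ≤ (S_i,H)). -/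
open Set

variable {X : Type*}

/-- If `𝒮` is 1-nested compatible, then for any three elements `(S₁,H)`, `(S₂,H)`,
`(S₃,H) ∈ 𝒮` with the same second component `H ≠ ∅`, at least two of them are comparable
under `≤`. -/
theorem two_of_three_comparable {X : Type*} [Fintype X] [Nonempty X]
    (𝒮 : Set (Set X × Set X)) (h : OneNestedCompatible 𝒮)
    (S₁ S₂ S₃ H : Set X) (hH : H ≠ ∅)
    (h₁ : ((S₁, H) : Set X × Set X) ∈ 𝒮) (h₂ : ((S₂, H) : Set X × Set X) ∈ 𝒮)
    (h₃ : ((S₃, H) : Set X × Set X) ∈ 𝒮) :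
    (sple ((S₁, H) : Set X × Set X) (S₂, H) ∨ sple ((S₂, H) : Set X × Set X) (S₁, H)) ∨
    (sple ((S₁, H) : Set X × Set X) (S₃, H) ∨ sple ((S₃, H) : Set X × Set X) (S₁, H)) ∨
    (sple ((S₂, H) : Set X × Set X) (S₃, H) ∨ sple ((S₃, H) : Set X × Set X) (S₂, H)) := by

  classical
  -- handle equalities
  by_cases e12 : S₁ = S₂
  · exact Or.inl (Or.inl (Or.inr (by rw [e12])))
  by_cases e13 : S₁ = S₃
  · exact Or.inr (Or.inl (Or.inl (Or.inr (by rw [e13]))))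
  by_cases e23 : S₂ = S₃
  · exact Or.inr (Or.inr (Or.inl (Or.inr (by rw [e23]))))
  by_contra hc
  push_neg at hc
  obtain ⟨⟨n12, n21⟩, ⟨n13, n31⟩, n23, n32⟩ := hc
  obtain ⟨_, _, _, _, nc4, nc5⟩ := h
  have hne12 : ((S₁, H) : Set X × Set X) ≠ (S₂, H) := by
    intro hh; exact e12 (congrArg Prod.fst hh)
  have hne13 : ((S₁, H) : Set X × Set X) ≠ (S₃, H) := by
    intro hh; exact e13 (congrArg Prod.fst hh)
  have hne23 : ((S₂, H) : Set X × Set X) ≠ (S₃, H) := by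
    intro hh; exact e23 (congrArg Prod.fst hh)
  obtain ⟨x, hx⟩ := Set.nonempty_iff_ne_empty.mpr hH
  have key : ∀ (A B : Set X), ((A, H) : Set X × Set X) ∈ 𝒮 → ((B, H) : Set X × Set X) ∈ 𝒮 →
      ((A, H) : Set X × Set X) ≠ (B, H) →
      ¬ sple ((A, H) : Set X × Set X) (B, H) → ¬ sple ((B, H) : Set X × Set X) (A, H) →
      A ∩ B = ∅ := by
    intro A B hA hB hne hAB hBA
    have := nc4 _ hA _ hB hne
    have hc3 : ((A ∪ H) ∩ (B ∪ H) : Set X) ≠ ∅ := by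
      intro hemp
      have : x ∈ ((A ∪ H) ∩ (B ∪ H) : Set X) := ⟨Or.inr hx, Or.inr hx⟩
      rw [hemp] at this; exact this
    have hna : ¬ splt ((A, H) : Set X × Set X) (B, H) := fun hs => hAB (Or.inl hs)
    have hnb : ¬ splt ((B, H) : Set X × Set X) (A, H) := fun hs => hBA (Or.inl hs)
    rcases this with ⟨ha, _⟩ | ⟨_, hb, _⟩ | ⟨_, _, hc, _⟩ | ⟨_, _, _, hd⟩
    · exact absurd ha hna
    · exact absurd hb hnb
    · exact absurd hc hc3
    · exact hd.1
  have d12 : S₁ ∩ S₂ = ∅ := key _ _ h₁ h₂ hne12 n12 n21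
  have d13 : S₁ ∩ S₃ = ∅ := key _ _ h₁ h₃ hne13 n13 n31
  have d23 : S₂ ∩ S₃ = ∅ := key _ _ h₂ h₃ hne23 n23 n32
  exact nc5 ⟨(S₁, H), h₁, (S₂, H), h₂, (S₃, H), h₃, rfl, rfl, hH, d12,
    Or.inr (by simp only [Set.union_inter_distrib_right, d13, d23, Set.union_empty])⟩
end
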